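/- Let G be a finite group and H ≤ G. In the rational Burnside algebra QB(G), the primitive idempotent e_H^G equals (1/|N_G(H)|) · Σ_{K ≤ H} |K| μ(K,H) [G/K], where μ is the Möbius function of the subgroup lattice of H. -/

import Mathlib

open Pointwise

attribute [local instance] Classical.propDecidable

section Aux

variable {G : Type*} [Group G] [Fintype G]

lemma conj_smul_le_iff (U A : Subgroup G) (g : G) :
    MulAut.conj g⁻¹ • U ≤ A ↔ ∀ u ∈ U, g⁻¹ * u * g ∈ A := by
  constructor
  · intro h u hu
    have : MulAut.conj g⁻¹ • u ∈ MulAut.conj g⁻¹ • U :=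
      Subgroup.smul_mem_pointwise_smul _ _ _ hu
    have := h this
    simpa [MulAut.conj_apply, mul_assoc] using this
  · intro h x hx
    rw [Subgroup.mem_pointwise_smul_iff_inv_smul_mem] at hx
    have hx' : g * x * g⁻¹ ∈ U := by
      simpa [MulAut.conj_apply] using hx
    have := h _ hx'
    simpa [mul_assoc] using this

lemma fixed_iff (U A : Subgroup G) (g : G) :
    (QuotientGroup.mk g : G ⧸ A) ∈ MulAction.fixedPoints U (G ⧸ A) ↔
      ∀ u ∈ U, g⁻¹ * u * g ∈ A := by
  constructor
  · intro h u hu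
    have h1 := h ⟨u⁻¹, inv_mem hu⟩
    change ((u⁻¹ : G) • (QuotientGroup.mk g : G ⧸ A)) = _ at h1
    rw [MulAction.Quotient.smul_mk, QuotientGroup.eq] at h1
    simpa [mul_assoc] using h1
  · intro h u
    change ((u : G) • (QuotientGroup.mk g : G ⧸ A)) = _
    rw [MulAction.Quotient.smul_mk, QuotientGroup.eq]
    have := h _ (inv_mem u.2)
    simpa [mul_assoc] using this


noncomputable def countEquiv (U A : Subgroup G) :
    (MulAction.fixedPoints U (G ⧸ A) × A) ≃ {g : G // ∀ u ∈ U, g⁻¹ * u * g ∈ A} where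
  toFun p := ⟨(p.1 : G ⧸ A).out * p.2, by
    obtain ⟨⟨x, hx⟩, a⟩ := p
    have hout : (QuotientGroup.mk x.out : G ⧸ A) = x := QuotientGroup.out_eq' x
    have h1 : ∀ u ∈ U, x.out⁻¹ * u * x.out ∈ A := by
      rw [← fixed_iff]; rwa [hout]
    intro u hu
    have : (x.out * (a : G))⁻¹ * u * (x.out * (a : G)) =
        (a : G)⁻¹ * (x.out⁻¹ * u * x.out) * (a : G) := by group
    rw [this]
    exact mul_mem (mul_mem (inv_mem a.2) (h1 u hu)) a.2⟩
  invFun g := (⟨QuotientGroup.mk g, (fixed_iff U A g).2 g.2⟩,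
    ⟨(QuotientGroup.mk (g : G) : G ⧸ A).out⁻¹ * g, by
      rw [← QuotientGroup.eq, QuotientGroup.out_eq']⟩)
  left_inv := by
    rintro ⟨⟨x, hx⟩, a⟩
    have hmk : (QuotientGroup.mk (x.out * (a : G)) : G ⧸ A) = x := by
      rw [QuotientGroup.mk_mul_of_mem _ a.2, QuotientGroup.out_eq']
    ext
    · simp [hmk]
    · simp only [hmk]
      group
  right_inv := by
    rintro ⟨g, hg⟩
    ext
    simp

lemma card_mul (U A : Subgroup G) :
    (Nat.card A) * Nat.card (MulAction.fixedPoints U (G ⧸ A)) =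
      Nat.card {g : G // ∀ u ∈ U, g⁻¹ * u * g ∈ A} := by
  rw [← Nat.card_congr (countEquiv (G := G) U A), Nat.card_prod, mul_comm]


lemma mem_conj_smul_iff (H : Subgroup G) (n x : G) :
    x ∈ MulAut.conj n • H ↔ n⁻¹ * x * n ∈ H := by
  rw [Subgroup.mem_pointwise_smul_iff_inv_smul_mem]
  simp [MulAut.conj_apply, mul_assoc]

lemma conj_smul_eq_self_iff (H : Subgroup G) (n : G) :
    MulAut.conj n • H = H ↔ n ∈ Subgroup.normalizer (H : Set G) := by
  rw [Subgroup.mem_normalizer_iff'', SetLike.ext_iff]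
  constructor
  · intro h x
    rw [← h x, mem_conj_smul_iff]
  · intro h x
    rw [mem_conj_smul_iff, ← h x]

lemma card_conj_set (U H : Subgroup G) (g0 : G) (h0 : MulAut.conj g0 • U = H) :
    Nat.card {g : G // MulAut.conj g • U = H} = Nat.card (Subgroup.normalizer (H : Set G)) := by
  have e : Subgroup.normalizer (H : Set G) ≃ {g : G // MulAut.conj g • U = H} := by
    refine ⟨fun n => ⟨(n : G) * g0, ?_⟩, fun g => ⟨(g : G) * g0⁻¹, ?_⟩, ?_, ?_⟩
    · rw [map_mul, mul_smul, h0, conj_smul_eq_self_iff]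
      exact n.2
    · rw [← conj_smul_eq_self_iff (H := H)]
      have h2 : MulAut.conj g0⁻¹ • H = U := by
        rw [map_inv]
        exact inv_smul_eq_iff.2 h0.symm
      have h1 : MulAut.conj ((g : G) * g0⁻¹) • H = MulAut.conj (g : G) • U := by
        rw [map_mul, mul_smul, h2]
      rw [h1, g.2]
    · intro n; ext; simp
    · intro g; ext; simp
  exact (Nat.card_congr e).symm

end Aux

/-- In the rational Burnside algebra of a finite group `G` (identified with its ghost ring
via the injective mark homomorphism), the primitive idempotent `e_H^G` equals
`(1/|N_G(H)|) ∑_{K ≤ H} |K| μ(K,H) [G/K]`, where `μ` is the Möbius function of the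
subgroup lattice. The mark of `e_H^G` at `U` is the indicator that `U` is conjugate to `H`,
and the mark of `[G/K]` at `U` is the number of `U`-fixed points of `G/K`. -/
theorem idempotent_moebius_formula (G : Type*) [Group G] [Fintype G] (H : Subgroup G)
    (μ : Subgroup G → Subgroup G → ℤ)
    (hμ₀ : ∀ A B : Subgroup G, ¬A ≤ B → μ A B = 0)
    (hμ : ∀ A B : Subgroup G, A ≤ B →
      (∑ᶠ C : Subgroup G, if A ≤ C ∧ C ≤ B then μ C B else 0) =
        if A = B then 1 else 0) :
    ∀ U : Subgroup G,
      (if ∃ g : G, MulAut.conj g • U = H then (1 : ℚ) else 0) =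
        (1 / (Nat.card (Subgroup.normalizer (H : Set G)) : ℚ)) *
          ∑ᶠ A : Subgroup G, (if A ≤ H then
            (Nat.card A : ℚ) * (μ A H : ℚ) *
              (Nat.card (MulAction.fixedPoints U (G ⧸ A)) : ℚ) else 0) := by
  intro U
  haveI : Fintype (Subgroup G) := Fintype.ofFinite _
  rw [finsum_eq_sum_of_fintype]
  have step1 : ∀ A : Subgroup G,
      (if A ≤ H then (Nat.card A : ℚ) * (μ A H : ℚ) *
          (Nat.card (MulAction.fixedPoints U (G ⧸ A)) : ℚ) else 0)
        = ∑ g : G, (if MulAut.conj g⁻¹ • U ≤ A ∧ A ≤ H then (μ A H : ℚ) else 0) := by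
    intro A
    by_cases hA : A ≤ H
    · simp only [hA, and_true, if_true]
      have hc : (Nat.card A : ℚ) * (Nat.card (MulAction.fixedPoints U (G ⧸ A)) : ℚ)
          = ((Finset.univ.filter (fun g : G => MulAut.conj g⁻¹ • U ≤ A)).card : ℚ) := by
        rw [← Nat.cast_mul, card_mul U A]
        congr 1
        rw [Nat.card_congr (Equiv.subtypeEquivRight
          (fun g => (conj_smul_le_iff U A g).symm)), Nat.card_eq_fintype_card,
          Fintype.card_subtype]
      have hs : ∑ g : G, (if MulAut.conj g⁻¹ • U ≤ A then (μ A H : ℚ) else 0)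
          = ((Finset.univ.filter (fun g : G => MulAut.conj g⁻¹ • U ≤ A)).card : ℚ)
              * (μ A H : ℚ) := by
        rw [← Finset.sum_filter, Finset.sum_const, nsmul_eq_mul]
      rw [hs]
      linear_combination (μ A H : ℚ) * hc
    · simp [hA]
  rw [Finset.sum_congr rfl (fun A _ => step1 A), Finset.sum_comm]
  have step3 : ∀ g : G,
      (∑ A : Subgroup G, if MulAut.conj g⁻¹ • U ≤ A ∧ A ≤ H then (μ A H : ℚ) else 0)
        = if MulAut.conj g⁻¹ • U = H then 1 else 0 := by
    intro g
    set V := MulAut.conj g⁻¹ • U with hVdef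
    by_cases hV : V ≤ H
    · have h1 := hμ V H hV
      rw [finsum_eq_sum_of_fintype] at h1
      exact_mod_cast congrArg (fun z : ℤ => (z : ℚ)) h1
    · rw [if_neg (fun h => hV (le_of_eq h))]
      apply Finset.sum_eq_zero
      intro A _
      rw [if_neg]
      rintro ⟨h1, h2⟩
      exact hV (h1.trans h2)
  rw [Finset.sum_congr rfl (fun g _ => step3 g), Finset.sum_boole]
  have hcard : (Finset.univ.filter (fun g : G => MulAut.conj g⁻¹ • U = H)).card
      = Nat.card {g : G // MulAut.conj g • U = H} := by
    rw [← Fintype.card_subtype, ← Nat.card_eq_fintype_card]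
    exact Nat.card_congr (Equiv.subtypeEquiv (Equiv.inv G) (fun g => by simp)).symm
  rw [hcard]
  by_cases hex : ∃ g : G, MulAut.conj g • U = H
  · obtain ⟨g0, hg0⟩ := hex
    rw [if_pos ⟨g0, hg0⟩, card_conj_set U H g0 hg0]
    have hN : (Nat.card (Subgroup.normalizer (H : Set G)) : ℚ) ≠ 0 := by
      exact_mod_cast Nat.card_pos.ne'
    field_simp
  · rw [if_neg hex]
    haveI : IsEmpty {g : G // MulAut.conj g • U = H} :=
      ⟨fun g => hex ⟨g, g.2⟩⟩
    rw [Nat.card_of_isEmpty (α := {g : G // MulAut.conj g • U = H})]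
    simp
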